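/- For the vector field v(r,φ) = e_1·e^{2iφ} in polar coordinates on the unit disc (identified with ℂ: v(z) = z²/|z|² for z ≠ 0), and its totally rotated copy u(z) = e^{iα}v(e^{−iα}z), the correlation ∫_{B₁(0)} conj(u(z))·v(z) dμ(z) equals π·e^{iα}. -/

import Mathlib

open MeasureTheory Complex Real

/-- For the counterexample field `v(z) = z²/|z|²` on the unit disc and its
totally rotated copy `u(z) = e^{iα} v(e^{−iα} z)`, the correlation over the
unit disc equals `π e^{iα}`. -/
theorem counterexample_correlation (α : ℝ) :
    (∫ z in Metric.ball (0 : ℂ) 1,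
        (starRingEnd ℂ)
            (Complex.exp (α * Complex.I) *
              ((Complex.exp (-(α : ℂ) * Complex.I) * z) ^ 2 /
                (Complex.normSq (Complex.exp (-(α : ℂ) * Complex.I) * z) : ℂ))) *
          (z ^ 2 / (Complex.normSq z : ℂ)) ∂volume) =
      (π : ℂ) * Complex.exp (α * Complex.I) := by
  have hcongr :
      (fun z : ℂ =>
        (starRingEnd ℂ)
            (Complex.exp (α * Complex.I) *
              ((Complex.exp (-(α : ℂ) * Complex.I) * z) ^ 2 /
                (Complex.normSq (Complex.exp (-(α : ℂ) * Complex.I) * z) : ℂ))) *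
          (z ^ 2 / (Complex.normSq z : ℂ)))
        =ᵐ[volume.restrict (Metric.ball (0 : ℂ) 1)]
        (fun _ => Complex.exp (α * Complex.I)) := by
    have h0 : (volume.restrict (Metric.ball (0 : ℂ) 1)) {(0 : ℂ)} = 0 := by
      simp [Measure.restrict_apply, MeasureTheory.measure_singleton]
    filter_upwards [measure_eq_zero_iff_ae_notMem.mp h0] with z hz
    have hz0 : z ≠ 0 := by simpa using hz
    have hnz : (Complex.normSq z : ℂ) ≠ 0 := by
      simpa [Complex.normSq_eq_zero] using hz0
    have habs : Complex.normSq (Complex.exp (-(α : ℂ) * Complex.I)) = 1 := by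
      have : ‖Complex.exp (-(α : ℂ) * Complex.I)‖ = 1 := by
        have : (-(α : ℂ) * Complex.I) = ((-α : ℝ) : ℂ) * Complex.I := by push_cast; ring
        rw [this, Complex.norm_exp_ofReal_mul_I]
      rw [← Complex.sq_norm, this, one_pow]
    have hconj1 : (starRingEnd ℂ) (Complex.exp (α * Complex.I)) =
        Complex.exp (-(α : ℂ) * Complex.I) := by
      rw [← Complex.exp_conj]; congr 1
      simp [Complex.conj_I]
    have hconj2 : (starRingEnd ℂ) (Complex.exp (-(α : ℂ) * Complex.I)) =
        Complex.exp ((α : ℂ) * Complex.I) := by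
      rw [← Complex.exp_conj]; congr 1
      simp [Complex.conj_I]
    have hee : Complex.exp (-((α : ℂ) * Complex.I)) * Complex.exp ((α : ℂ) * Complex.I) = 1 := by
      rw [← Complex.exp_add]; ring_nf; exact Complex.exp_zero
    have hzz : (starRingEnd ℂ) z * z = (Complex.normSq z : ℂ) := by
      rw [mul_comm, Complex.mul_conj]
    simp only [Complex.normSq_mul, habs, one_mul, map_mul, map_div₀, map_pow,
      Complex.conj_ofReal, hconj1, hconj2]
    field_simp
    linear_combination (((starRingEnd ℂ) z * z) ^ 2) * hee +
        ((starRingEnd ℂ) z * z + (Complex.normSq z : ℂ)) * hzz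
  rw [integral_congr_ae hcongr, setIntegral_const]
  have hvol : (volume (Metric.ball (0 : ℂ) 1)).toReal = π := by
    simp [Complex.volume_ball]
  rw [measureReal_def, hvol, real_smul]
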